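/- Space KAM abstract-time overhead explosion: define tn := C0⟨C1⟨⋯Cn⟨λy.I⟩⋯⟩⟩ I. For every n ∈ ℕ, the complete Space KAM run σn from the initial state (tn, ε, ε) has Θ(n) transitions and ends in the state (I, ε, ε) (correspondingly tn →wh^{pn} I with pn = Θ(n)), yet σn contains a state whose closure count is at least 2^n; hence the space of σn (and a fortiori its low-level time, which sums per-transition costs at least linear in the source-state size) is Ω(2^n) while the number of β-steps is only Θ(n). -/

import Mathlib

set_option autoImplicit false

/-! λ-terms with variable names in ℕ. -/
inductive Term : Type
  | var : ℕ → Term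
  | lam : ℕ → Term → Term
  | app : Term → Term → Term
deriving DecidableEq

namespace Term

/-- Free variables. -/
def fv : Term → Finset ℕ
  | var x => {x}
  | lam x t => fv t \ {x}
  | app t u => fv t ∪ fv u

/-- A term is closed if it has no free variables. -/
def closed (t : Term) : Prop := t.fv = ∅

/-- Substitution of `u` for the free occurrences of `x`; it is capture-avoiding
whenever the substituted term `u` is closed, which is the only case arising in
Closed Call-by-Name. -/
def subst (x : ℕ) (u : Term) : Term → Term
  | var y => if y = x then u else var y
  | lam y t => if y = x then lam y t else lam y (subst x u t)
  | app t r => app (subst x u t) (subst x u r)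

/-- In-order (left-to-right) enumeration of the constructors (as subterm occurrences). -/
def inorder : Term → List Term
  | var x => [var x]
  | lam x t => lam x t :: inorder t
  | app t u => inorder t ++ app t u :: inorder u

/-- Membership in the deterministic λ-calculus `Λdet`: the right subterm of every
application is a variable or an abstraction. -/
def IsDet : Term → Prop
  | var _ => True
  | lam _ t => IsDet t
  | app t u => IsDet t ∧ IsDet u ∧ ((∃ x, u = var x) ∨ ∃ x r, u = lam x r)

end Term

/-- Weak head reduction: `(λx.t) u r1 … rh →wh t{x:=u} r1 … rh`. -/
inductive Whr : Term → Term → Prop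
  | beta (x : ℕ) (t u : Term) : Whr (Term.app (Term.lam x t) u) (Term.subst x u t)
  | appL {t t' : Term} (u : Term) : Whr t t' → Whr (Term.app t u) (Term.app t' u)

def WhNormal (t : Term) : Prop := ∀ u, ¬ Whr t u

/-- `NSteps R n a b`: exactly `n` `R`-steps from `a` to `b`. -/
inductive NSteps {α : Type _} (R : α → α → Prop) : ℕ → α → α → Prop
  | refl (a : α) : NSteps R 0 a a
  | head {a b c : α} {n : ℕ} : R a b → NSteps R n b c → NSteps R (n + 1) a c

/-! Closures and (local) environments. -/
mutual
  inductive Clo : Type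
    | mk : Term → Env → Clo
  inductive Env : Type
    | nil : Env
    | cons : ℕ → Clo → Env → Env
end

def Env.lookup : Env → ℕ → Option Clo
  | .nil, _ => none
  | .cons y c e, x => if y = x then some c else Env.lookup e x

def Env.dom : Env → Finset ℕ
  | .nil => ∅
  | .cons x _ e => insert x (Env.dom e)

/-- Restriction `e|s` of an environment to a set of variables. -/
def Env.restrict : Env → Finset ℕ → Env
  | .nil, _ => .nil
  | .cons x c e, s => if x ∈ s then .cons x c (Env.restrict e s) else Env.restrict e s

mutual
  /-- Decoding of a closure into a λ-term. -/
  def Clo.decode : Clo → Term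
    | .mk t e => Env.decode t e
  /-- Decoding: `(t, ε)↓ = t`, `(t, [x←c]·e)↓ = (t{x:=c↓}, e)↓`. -/
  def Env.decode : Term → Env → Term
    | t, .nil => t
    | t, .cons x c e => Env.decode (Term.subst x (Clo.decode c) t) e
end

mutual
  /-- Hereditary number of closures in a closure (without sharing). -/
  def Clo.count : Clo → ℕ
    | .mk _ e => 1 + Env.count e
  def Env.count : Env → ℕ
    | .nil => 0
    | .cons _ c e => Clo.count c + Env.count e
end

mutual
  /-- A closure `(t,e)` is closed: `fv t ⊆ dom e` and hereditarily so. -/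
  def Clo.Closed : Clo → Prop
    | .mk t e => t.fv ⊆ e.dom ∧ Env.ClosedE e
  def Env.ClosedE : Env → Prop
    | .nil => True
    | .cons _ c e => Clo.Closed c ∧ Env.ClosedE e
end

mutual
  /-- Environment domain invariant: `dom e = fv t`, hereditarily. -/
  def Clo.DomInv : Clo → Prop
    | .mk t e => e.dom = t.fv ∧ Env.DomInvE e
  def Env.DomInvE : Env → Prop
    | .nil => True
    | .cons _ c e => Clo.DomInv c ∧ Env.DomInvE e
end

/-- Size of the left address of (the first occurrence of) `u` in the code `t0`:
the binary length of its index in the in-order enumeration of the constructors of `t0`. -/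
def addrSize (t0 u : Term) : ℕ := Nat.size (t0.inorder.idxOf u)

mutual
  /-- Size of a closure, relative to the initial code `t0`. -/
  def Clo.size : Term → Clo → ℕ
    | t0, .mk u e => addrSize t0 u + Env.sizeE t0 e
  /-- Size of an environment, relative to the initial code `t0`. -/
  def Env.sizeE : Term → Env → ℕ
    | _, .nil => 0
    | t0, .cons x c e => addrSize t0 (Term.var x) + Clo.size t0 c + Env.sizeE t0 e
end

def stackSize (t0 : Term) (S : List Clo) : ℕ := (S.map (Clo.size t0)).sum

/-- States of the (Naive/Space) KAM. -/
structure State where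
  tm : Term
  env : Env
  stk : List Clo

/-- Size of a state, relative to the initial code `t0`. -/
def State.size (t0 : Term) (s : State) : ℕ :=
  addrSize t0 s.tm + Env.sizeE t0 s.env + stackSize t0 s.stk

/-- Closure count of a state: total number of closures occurring in it,
hereditarily and without sharing (the active term/environment pair is a closure). -/
def State.count (s : State) : ℕ :=
  1 + Env.count s.env + (s.stk.map Clo.count).sum

def State.decode (s : State) : Term :=
  s.stk.foldl (fun a c => Term.app a c.decode) (Env.decode s.tm s.env)

def initState (t : Term) : State := ⟨t, .nil, []⟩

/-! The Naive KAM. -/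
inductive NK : State → State → Prop
  | sea (t u : Term) (e : Env) (S : List Clo) :
      NK ⟨.app t u, e, S⟩ ⟨t, e, .mk u e :: S⟩
  | beta (x : ℕ) (t : Term) (e : Env) (c : Clo) (S : List Clo) :
      NK ⟨.lam x t, e, c :: S⟩ ⟨t, .cons x c e, S⟩
  | sub {x : ℕ} {e : Env} {u : Term} {e' : Env} (S : List Clo) :
      Env.lookup e x = some (.mk u e') → NK ⟨.var x, e, S⟩ ⟨u, e', S⟩

def NKFinal (s : State) : Prop := ∀ s', ¬ NK s s'

/-- Naive KAM runs counting the number of β-transitions. -/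
inductive NKRun : ℕ → State → State → Prop
  | refl (s : State) : NKRun 0 s s
  | sea {t u : Term} {e : Env} {S : List Clo} {s' : State} {n : ℕ} :
      NKRun n ⟨t, e, .mk u e :: S⟩ s' → NKRun n ⟨.app t u, e, S⟩ s'
  | beta {x : ℕ} {t : Term} {e : Env} {c : Clo} {S : List Clo} {s' : State} {n : ℕ} :
      NKRun n ⟨t, .cons x c e, S⟩ s' → NKRun (n + 1) ⟨.lam x t, e, c :: S⟩ s'
  | sub {x : ℕ} {e : Env} {u : Term} {e' : Env} {S : List Clo} {s' : State} {n : ℕ} :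
      Env.lookup e x = some (.mk u e') → NKRun n ⟨u, e', S⟩ s' → NKRun n ⟨.var x, e, S⟩ s'

/-! The Space KAM. -/
inductive SK : State → State → Prop
  | seav {t : Term} {x : ℕ} {e : Env} {c : Clo} (S : List Clo) :
      Env.lookup e x = some c →
      SK ⟨.app t (.var x), e, S⟩ ⟨t, e.restrict t.fv, c :: S⟩
  | seanv {t u : Term} {e : Env} (S : List Clo) :
      (∀ x, u ≠ .var x) →
      SK ⟨.app t u, e, S⟩ ⟨t, e.restrict t.fv, .mk u (e.restrict u.fv) :: S⟩
  | betaw {x : ℕ} {t : Term} {e : Env} (c : Clo) (S : List Clo) :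
      x ∉ t.fv → SK ⟨.lam x t, e, c :: S⟩ ⟨t, e, S⟩
  | betanw {x : ℕ} {t : Term} {e : Env} (c : Clo) (S : List Clo) :
      x ∈ t.fv → SK ⟨.lam x t, e, c :: S⟩ ⟨t, .cons x c e, S⟩
  | sub {x : ℕ} {e : Env} {u : Term} {e' : Env} (S : List Clo) :
      Env.lookup e x = some (.mk u e') → SK ⟨.var x, e, S⟩ ⟨u, e', S⟩

def SKFinal (s : State) : Prop := ∀ s', ¬ SK s s'

/-- Space KAM runs counting the number of β-transitions (`→βw` and `→β¬w`). -/
inductive SKRun : ℕ → State → State → Prop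
  | refl (s : State) : SKRun 0 s s
  | seav {t : Term} {x : ℕ} {e : Env} {c : Clo} {S : List Clo} {s' : State} {n : ℕ} :
      Env.lookup e x = some c →
      SKRun n ⟨t, e.restrict t.fv, c :: S⟩ s' → SKRun n ⟨.app t (.var x), e, S⟩ s'
  | seanv {t u : Term} {e : Env} {S : List Clo} {s' : State} {n : ℕ} :
      (∀ x, u ≠ .var x) →
      SKRun n ⟨t, e.restrict t.fv, .mk u (e.restrict u.fv) :: S⟩ s' →
      SKRun n ⟨.app t u, e, S⟩ s'
  | betaw {x : ℕ} {t : Term} {e : Env} {c : Clo} {S : List Clo} {s' : State} {n : ℕ} :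
      x ∉ t.fv → SKRun n ⟨t, e, S⟩ s' → SKRun (n + 1) ⟨.lam x t, e, c :: S⟩ s'
  | betanw {x : ℕ} {t : Term} {e : Env} {c : Clo} {S : List Clo} {s' : State} {n : ℕ} :
      x ∈ t.fv → SKRun n ⟨t, .cons x c e, S⟩ s' → SKRun (n + 1) ⟨.lam x t, e, c :: S⟩ s'
  | sub {x : ℕ} {e : Env} {u : Term} {e' : Env} {S : List Clo} {s' : State} {n : ℕ} :
      Env.lookup e x = some (.mk u e') → SKRun n ⟨u, e', S⟩ s' → SKRun n ⟨.var x, e, S⟩ s'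

/-! Concrete combinators. -/

/-- I := λx.x -/
def tmI : Term := .lam 0 (.var 0)
/-- θ := λx.λy.y (x x y)  (variables: x := 0, y := 1) -/
def tmTheta : Term := .lam 0 (.lam 1 (.app (.var 1) (.app (.app (.var 0) (.var 0)) (.var 1))))
/-- fix := θ θ -/
def tmFix : Term := .app tmTheta tmTheta
/-- x x y -/
def xxy : Term := .app (.app (.var 0) (.var 0)) (.var 1)
/-- toyaux := λf.λz. z f f I  (f := 3, z := 2) -/
def tmToyaux : Term := .lam 3 (.lam 2 (.app (.app (.app (.var 2) (.var 3)) (.var 3)) tmI))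
/-- toy := fix toyaux -/
def tmToy : Term := .app tmFix tmToyaux

/-- Scott encoding of binary strings (false = 0, true = 1; x0 := 4, x1 := 5, xε := 6):
`⟨ε⟩ := λx0.λx1.λxε.xε`, `⟨b·r⟩ := λx0.λx1.λxε.xb ⟨r⟩`. -/
def encStr : List Bool → Term
  | [] => .lam 4 (.lam 5 (.lam 6 (.var 6)))
  | b :: r => .lam 4 (.lam 5 (.lam 6 (.app (.var (if b then 5 else 4)) (encStr r))))

/-- A variable fresh for `t`. -/
def freshVar (t : Term) : ℕ := t.fv.sup id + 1

/-- η-expansion: `η(t) := λx. t x` with `x ∉ fv t`. -/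
def Term.eta (t : Term) : Term := .lam (freshVar t) (.app t (.var (freshVar t)))

/-- n-fold η-expansion. -/
def etaN (n : ℕ) (t : Term) : Term := Term.eta^[n] t

/-! Environment families for the Naive KAM scrolling invariant
(variables: x := 0, y := 1, z := 2, f := 3, x0 := 4, x1 := 5, xε := 6). -/

/-- `e0 := [x←(θ,ε)]·[y←(toyaux,ε)]`, `e(i+1) := [x←(x,ei)]·[y←(y,ei)]`. -/
def eE : ℕ → Env
  | 0 => .cons 0 (.mk tmTheta .nil) (.cons 1 (.mk tmToyaux .nil) .nil)
  | i + 1 => .cons 0 (.mk (.var 0) (eE i)) (.cons 1 (.mk (.var 1) (eE i)) .nil)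

/-- `e″0 := ε`, `e″(i+1) := [xε←(I,e′i)]·[x1←(f,e′i)]·[x0←(f,e′i)]·e″i`
(with `e′i` inlined). -/
def eDD (s : List Bool) : ℕ → Env
  | 0 => .nil
  | i + 1 =>
    let ep : Env := .cons 2 (.mk (encStr (s.drop i)) (eDD s i)) (.cons 3 (.mk xxy (eE i)) .nil)
    .cons 6 (.mk tmI ep) (.cons 5 (.mk (.var 3) ep) (.cons 4 (.mk (.var 3) ep) (eDD s i)))

/-- `e′i := [z←(⟨b(i+1)⋯bn⟩, e″i)]·[f←(x x y, ei)]`. -/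
def eP (s : List Bool) (i : ℕ) : Env :=
  .cons 2 (.mk (encStr (s.drop i)) (eDD s i)) (.cons 3 (.mk xxy (eE i)) .nil)

/-! The family `tn` for the abstract-time overhead explosion
(variables `xi := i`). -/

/-- `x0 x1 ⋯ xn`. -/
def varsApp : ℕ → Term
  | 0 => .var 0
  | n + 1 => .app (varsApp n) (.var (n + 1))

/-- Term component of `Sn`: `x0 x0` for `n = 0`, `x0 ⋯ xn` for `n ≥ 1`. -/
def sTerm : ℕ → Term
  | 0 => .app (.var 0) (.var 0)
  | n + 1 => varsApp (n + 1)

/-- `e0 := [x0←(I,ε)]`, `e(n+1) := [x(n+1)←Sn]·en`. -/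
def eN : ℕ → Env
  | 0 => .cons 0 (.mk tmI .nil) .nil
  | n + 1 => .cons (n + 1) (.mk (sTerm n) (eN n)) (eN n)

/-- `Sn := (sTerm n, en)`. -/
def sClo (n : ℕ) : Clo := .mk (sTerm n) (eN n)

/-- `Ci⟨t⟩ := λxi. t (x0 ⋯ xi)` (with `C0⟨t⟩ = λx0. t (x0 x0)`). -/
def cPlug (i : ℕ) (t : Term) : Term := .lam i (.app t (sTerm i))

/-- `C0⟨C1⟨⋯Cn⟨t⟩⋯⟩⟩`. -/
def nest (n : ℕ) (t : Term) : Term := (List.range (n + 1)).foldr cPlug t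

/-- `tn := C0⟨C1⟨⋯Cn⟨λy.I⟩⋯⟩⟩ I`. -/
def tN (n : ℕ) : Term := .app (nest n (.lam 1 tmI)) tmI

/-! Global-copy scrolling terms (s′ := 7, z := 2, x := 0, f := 3). -/

/-- `λf.λs′. s′ f f z` (free variable z). -/
def tScroll : Term :=
  .lam 3 (.lam 7 (.app (.app (.app (.var 7) (.var 3)) (.var 3)) (.var 2)))

/-- `glCpy := λx.( fix (λf.λs′. s′ f f x) ) x`. -/
def glCpy : Term :=
  .lam 0 (.app (.app tmFix
    (.lam 3 (.lam 7 (.app (.app (.app (.var 7) (.var 3)) (.var 3)) (.var 0)))))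
    (.var 0))

/-! The Space LAM. -/

structure LState where
  dump : List (Clo × List Clo)
  tm : Term
  env : Env
  stk : List Clo

inductive LAM : LState → LState → Prop
  | sea {D : List (Clo × List Clo)} {t u : Term} {e : Env} {S : List Clo} :
      LAM ⟨D, .app t u, e, S⟩ ⟨(.mk t (e.restrict t.fv), S) :: D, u, e.restrict u.fv, []⟩
  | ret {D : List (Clo × List Clo)} {u : Term} {e' : Env} {S : List Clo}
      {x : ℕ} {t : Term} {e : Env} :
      LAM ⟨(.mk u e', S) :: D, .lam x t, e, []⟩ ⟨D, u, e', .mk (.lam x t) e :: S⟩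
  | betaw {D : List (Clo × List Clo)} {x : ℕ} {t : Term} {e : Env} {c : Clo} {S : List Clo} :
      x ∉ t.fv → LAM ⟨D, .lam x t, e, c :: S⟩ ⟨D, t, e, S⟩
  | betanw {D : List (Clo × List Clo)} {x : ℕ} {t : Term} {e : Env} {c : Clo} {S : List Clo} :
      x ∈ t.fv → LAM ⟨D, .lam x t, e, c :: S⟩ ⟨D, t, .cons x c e, S⟩
  | sub {D : List (Clo × List Clo)} {x : ℕ} {e : Env} {u : Term} {e' : Env} {S : List Clo} :
      Env.lookup e x = some (.mk u e') → LAM ⟨D, .var x, e, S⟩ ⟨D, u, e', S⟩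

def LFinal (ls : LState) : Prop := ∀ ls', ¬ LAM ls ls'

/-- The Space KAM state `(t,e,S)` seen as the Space LAM state `(ε,t,e,S)`. -/
def embed (s : State) : LState := ⟨[], s.tm, s.env, s.stk⟩

def lInit (t : Term) : LState := ⟨[], t, .nil, []⟩

def LState.size (t0 : Term) (ls : LState) : ℕ :=
  (ls.dump.map (fun p => Clo.size t0 p.1 + stackSize t0 p.2)).sum +
    addrSize t0 ls.tm + Env.sizeE t0 ls.env + stackSize t0 ls.stk

/-- A LAM-sequence from `a` whose first state with empty dump after `a` is its target. -/
inductive LRunToEmpty : LState → LState → Prop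
  | single {a b : LState} : LAM a b → b.dump = [] → LRunToEmpty a b
  | cons {a b c : LState} : LAM a b → b.dump ≠ [] → LRunToEmpty b c → LRunToEmpty a c

/-! Log-sensitive Turing machines. -/

/-- Input-tape alphabet {0, 1, L, R}. -/
inductive ISym : Type | zero | one | lend | rend
deriving DecidableEq

/-- Work-tape alphabet {0, 1, □}. -/
inductive WSym : Type | zero | one | blank
deriving DecidableEq

/-- Head moves. -/
inductive Move : Type | L | R | N
deriving DecidableEq

/-- A log-sensitive Turing machine: states `Fin n`, initial state, final states
`qtrue = s1` and `qfalse = s0`, and a deterministic transition function reading the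
current state and the two scanned symbols, writing on the work tape, moving both
heads, and changing state (`none` = halt). -/
structure TM where
  n : ℕ
  start : Fin n
  qtrue : Fin n
  qfalse : Fin n
  δ : Fin n → ISym → WSym → Option (Fin n × WSym × Move × Move)

/-- A configuration: state, input-head position (on the tape `L i R`), and the
work tape split as (left part, reversed) / scanned symbol / (right part). -/
structure Config (M : TM) where
  q : Fin M.n
  ipos : ℕ
  wl : List WSym
  wcur : WSym
  wr : List WSym

/-- The symbol of the input tape `L i R` at a given position. -/
def inputAt (i : List Bool) (p : ℕ) : ISym :=
  if p = 0 then .lend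
  else if h : p - 1 < i.length then (if i.get ⟨p - 1, h⟩ then .one else .zero)
  else .rend

def moveIpos (p : ℕ) : Move → ℕ
  | .L => p - 1
  | .R => p + 1
  | .N => p

def moveWork (wl : List WSym) (c : WSym) (wr : List WSym) : Move → List WSym × WSym × List WSym
  | .L => match wl with
    | [] => ([], .blank, c :: wr)
    | a :: l => (l, a, c :: wr)
  | .R => match wr with
    | [] => (c :: wl, .blank, [])
    | a :: r => (c :: wl, a, r)
  | .N => (wl, c, wr)

/-- One transition of the TM `M` on input `i`. -/
def TMStep (M : TM) (i : List Bool) (c c' : Config M) : Prop :=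
  ∃ q' w mi mw, M.δ c.q (inputAt i c.ipos) c.wcur = some (q', w, mi, mw) ∧
    c'.q = q' ∧ c'.ipos = moveIpos c.ipos mi ∧
    (c'.wl, c'.wcur, c'.wr) = moveWork c.wl w c.wr mw

def initConfig (M : TM) : Config M := ⟨M.start, 0, [], .blank, []⟩

/-- Number of work-tape cells used by a configuration. -/
def Config.workSize {M : TM} (c : Config M) : ℕ := c.wl.length + 1 + c.wr.length

def TMFinal (M : TM) (i : List Bool) (c : Config M) : Prop := ∀ c', ¬ TMStep M i c c'

/-- `⟨1⟩ := λx.λy.x` and `⟨0⟩ := λx.λy.y`. -/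
def encBool (b : Bool) : Term :=
  if b then .lam 0 (.lam 1 (.var 0)) else .lam 0 (.lam 1 (.var 1))


/-! ### Auxiliary development for Statement 16 -/

namespace SKX

/-- `restC i k` = `Ci⟨Ci+1⟨⋯C(i+k-1)⟨λy.I⟩⋯⟩⟩`. -/
def restC : ℕ → ℕ → Term
  | _, 0 => .lam 1 tmI
  | i, k+1 => cPlug i (restC (i+1) k)

lemma range'_foldr : ∀ (k i : ℕ), (List.range' i k).foldr cPlug (Term.lam 1 tmI) = restC i k := by
  intro k
  induction k with
  | zero => intro i; rfl
  | succ k ih =>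
      intro i
      rw [List.range'_succ]
      simp only [List.foldr]
      rw [ih]
      rfl

lemma nest_eq (n : ℕ) : nest n (.lam 1 tmI) = restC 0 (n+1) := by
  rw [nest, List.range_eq_range']
  exact range'_foldr (n+1) 0

lemma fv_tmI : tmI.fv = ∅ := by simp [tmI, Term.fv]

lemma fv_lam1I : (Term.lam 1 tmI).fv = ∅ := by simp [Term.fv, tmI]

lemma fv_varsApp : ∀ j, (varsApp j).fv = Finset.range (j+1) := by
  intro j
  induction j with
  | zero => simp [varsApp, Term.fv]
  | succ j ih =>
      ext x
      simp [varsApp, Term.fv, ih, Finset.mem_range]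
      omega

lemma fv_sTerm : ∀ i, (sTerm i).fv = Finset.range (i+1) := by
  intro i
  cases i with
  | zero => ext x; simp [sTerm, Term.fv, Finset.mem_range]
  | succ i => exact fv_varsApp (i+1)

lemma fv_restC_succ : ∀ k i, (restC i (k+1)).fv = Finset.range i := by
  intro k
  induction k with
  | zero =>
      intro i
      have h : restC i (0+1) = .lam i (.app (.lam 1 tmI) (sTerm i)) := rfl
      rw [h]
      ext x
      simp [Term.fv, tmI, fv_sTerm, Finset.mem_range]
      omega
  | succ k ih =>
      intro i
      have h : restC i (k+1+1) = .lam i (.app (restC (i+1) (k+1)) (sTerm i)) := rfl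
      rw [h,
        show (Term.lam i (.app (restC (i+1) (k+1)) (sTerm i))).fv
          = ((restC (i+1) (k+1)).fv ∪ (sTerm i).fv) \ {i} from rfl,
        ih (i+1), fv_sTerm]
      ext x
      simp [Finset.mem_range]
      omega

lemma mem_fv_body (i k : ℕ) : i ∈ (Term.app (restC (i+1) k) (sTerm i)).fv := by
  have h : i ∈ (sTerm i).fv := by rw [fv_sTerm]; simp
  simp only [Term.fv, Finset.mem_union]
  exact Or.inr h

lemma restrict_empty : ∀ e : Env, e.restrict ∅ = .nil
  | .nil => rfl
  | .cons x c e => by simp [Env.restrict, restrict_empty e]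

lemma restrict_superset : ∀ (e : Env) (s : Finset ℕ), e.dom ⊆ s → e.restrict s = e
  | .nil, _, _ => rfl
  | .cons x c e, s, h => by
      simp only [Env.dom] at h
      have hx : x ∈ s := h (Finset.mem_insert_self _ _)
      have he : Env.dom e ⊆ s := fun y hy => h (Finset.mem_insert_of_mem hy)
      simp [Env.restrict, hx, restrict_superset e s he]

lemma dom_eN : ∀ i, (eN i).dom ⊆ Finset.range (i+1) := by
  intro i
  induction i with
  | zero =>
      intro x hx
      simp [eN, Env.dom] at hx
      simp [hx]
  | succ i ih =>
      intro x hx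
      simp only [eN, Env.dom, Finset.mem_insert] at hx
      rcases hx with h | h
      · simp [h]
      · have := ih h
        simp only [Finset.mem_range] at *
        omega

lemma restrict_eN_sTerm (i : ℕ) : (eN i).restrict (sTerm i).fv = eN i := by
  rw [fv_sTerm]; exact restrict_superset _ _ (dom_eN i)

lemma restrict_eN_restC (i k : ℕ) : (eN i).restrict (restC (i+1) (k+1)).fv = eN i := by
  rw [fv_restC_succ]; exact restrict_superset _ _ (dom_eN i)

lemma sTerm_ne_var (i : ℕ) : ∀ x, sTerm i ≠ .var x := by
  cases i <;> intro x <;> simp [sTerm, varsApp]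

lemma count_eN : ∀ i, Env.count (eN i) + 1 = 2^(i+1) := by
  intro i
  induction i with
  | zero => simp [eN, Env.count, Clo.count]
  | succ i ih =>
      simp only [eN, Env.count, Clo.count, pow_succ] at *
      omega

lemma skfinal : SKFinal ⟨tmI, .nil, []⟩ := by
  intro s' h
  rw [show (⟨tmI, .nil, []⟩ : State) = ⟨.lam 0 (.var 0), .nil, []⟩ from rfl] at h
  cases h

lemma whnormal : WhNormal tmI := by
  intro u h
  rw [show tmI = .lam 0 (.var 0) from rfl] at h
  cases h

lemma runB : ∀ k i, NSteps SK (2*k + 2) ⟨.app (restC (i+1) k) (sTerm i), eN i, []⟩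
    ⟨tmI, .nil, []⟩ := by
  intro k
  induction k with
  | zero =>
      intro i
      rw [show restC (i+1) 0 = Term.lam 1 tmI from rfl]
      refine NSteps.head (SK.seanv [] (sTerm_ne_var i)) ?_
      rw [restrict_eN_sTerm]
      rw [show (eN i).restrict (Term.lam 1 tmI).fv = .nil by rw [fv_lam1I]; exact restrict_empty _]
      refine NSteps.head (SK.betaw _ [] (by rw [fv_tmI]; exact Finset.notMem_empty _)) ?_
      exact NSteps.refl _
  | succ k ih =>
      intro i
      rw [show 2*(k+1)+2 = (2*k+2)+1+1 from by ring]
      refine NSteps.head (SK.seanv [] (sTerm_ne_var i)) ?_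
      rw [restrict_eN_sTerm, restrict_eN_restC]
      rw [show restC (i+1) (k+1) = Term.lam (i+1) (.app (restC (i+2) k) (sTerm (i+1))) from rfl]
      refine NSteps.head (SK.betanw _ [] (mem_fv_body (i+1) k)) ?_
      exact ih (i+1)

lemma skRun (n : ℕ) : NSteps SK (2*n+4) (initState (tN n)) ⟨tmI, .nil, []⟩ := by
  rw [show 2*n+4 = (2*n+2)+1+1 from by ring]
  rw [show initState (tN n) = ⟨.app (restC 0 (n+1)) tmI, .nil, []⟩ by
        rw [initState, tN, nest_eq]]
  refine NSteps.head (SK.seanv [] (fun x => by simp [tmI])) ?_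
  rw [show Env.restrict .nil (restC 0 (n+1)).fv = .nil from rfl,
      show Env.restrict .nil tmI.fv = .nil from rfl,
      show restC 0 (n+1) = Term.lam 0 (.app (restC 1 n) (sTerm 0)) from rfl]
  refine NSteps.head (SK.betanw _ [] (mem_fv_body 0 n)) ?_
  exact runB n 0

lemma reach : ∀ k i, Relation.ReflTransGen SK ⟨.app (restC (i+1) k) (sTerm i), eN i, []⟩
    ⟨.app (restC (i+k+1) 0) (sTerm (i+k)), eN (i+k), []⟩ := by
  intro k
  induction k with
  | zero => intro i; exact Relation.ReflTransGen.refl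
  | succ k ih =>
      intro i
      refine Relation.ReflTransGen.head (SK.seanv [] (sTerm_ne_var i)) ?_
      rw [restrict_eN_sTerm, restrict_eN_restC]
      rw [show restC (i+1) (k+1) = Term.lam (i+1) (.app (restC (i+2) k) (sTerm (i+1))) from rfl]
      refine Relation.ReflTransGen.head (SK.betanw _ [] (mem_fv_body (i+1) k)) ?_
      have h := ih (i+1)
      rw [show (i+1) + k = i+(k+1) from by omega] at h
      exact h

lemma reach_main (n : ℕ) : ∃ st : State, Relation.ReflTransGen SK (initState (tN n)) st ∧
    2 ^ n ≤ st.count := by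
  refine ⟨⟨.app (restC (n+1) 0) (sTerm n), eN n, []⟩, ?_, ?_⟩
  · rw [show initState (tN n) = ⟨.app (restC 0 (n+1)) tmI, .nil, []⟩ by
        rw [initState, tN, nest_eq]]
    refine Relation.ReflTransGen.head (SK.seanv [] (fun x => by simp [tmI])) ?_
    rw [show Env.restrict .nil (restC 0 (n+1)).fv = .nil from rfl,
        show Env.restrict .nil tmI.fv = .nil from rfl,
        show restC 0 (n+1) = Term.lam 0 (.app (restC 1 n) (sTerm 0)) from rfl]
    refine Relation.ReflTransGen.head (SK.betanw _ [] (mem_fv_body 0 n)) ?_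
    have h := reach n 0
    simp only [Nat.zero_add] at h
    exact h
  · have h := count_eN n
    have h2 : (2:ℕ)^n ≤ 2^(n+1) := Nat.pow_le_pow_right (by norm_num) (Nat.le_succ n)
    simp only [State.count, List.map_nil, List.sum_nil]
    omega

/-! Weak head reduction of `tN n`. -/

def msub : ℕ → Term → Term
  | 0, t => Term.subst 0 tmI t
  | j+1, t => Term.subst (j+1) (msub j (sTerm j)) (msub j t)

lemma msub_app : ∀ i a b, msub i (.app a b) = .app (msub i a) (msub i b) := by
  intro i
  induction i with
  | zero => intro a b; simp [msub, Term.subst]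
  | succ j ih => intro a b; simp [msub, ih, Term.subst]

lemma msub_lam : ∀ i x t, i < x → msub i (.lam x t) = .lam x (msub i t) := by
  intro i
  induction i with
  | zero =>
      intro x t h
      have hx : ¬ x = 0 := by omega
      simp [msub, Term.subst, hx]
  | succ j ih =>
      intro x t h
      have h1 : j < x := by omega
      have h2 : ¬ x = j+1 := by omega
      simp [msub, Term.subst, h2, ih _ _ h1]

lemma subst_tmI (x : ℕ) (u : Term) (h : x ≠ 0) : Term.subst x u tmI = tmI := by
  have h' : ¬ (0 : ℕ) = x := fun hh => h hh.symm
  simp [tmI, Term.subst, h']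

lemma msub_lam1I : ∀ i, msub i (.lam 1 tmI) = .lam 1 tmI := by
  intro i
  induction i with
  | zero =>
      show Term.subst 0 tmI (.lam 1 tmI) = .lam 1 tmI
      rfl
  | succ j ih =>
      show Term.subst (j+1) (msub j (sTerm j)) (msub j (.lam 1 tmI)) = .lam 1 tmI
      rw [ih]
      by_cases h : (1:ℕ) = j+1
      · simp only [Term.subst]
        rw [if_pos h]
      · have h0 : ¬(0:ℕ) = j+1 := by omega
        simp [Term.subst, h, h0, tmI]

lemma whrRun : ∀ k i, NSteps Whr (k+1) (.app (msub i (restC (i+1) k)) (msub i (sTerm i))) tmI := by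
  intro k
  induction k with
  | zero =>
      intro i
      rw [show restC (i+1) 0 = Term.lam 1 tmI from rfl, msub_lam1I]
      refine NSteps.head (Whr.beta 1 tmI (msub i (sTerm i))) ?_
      rw [subst_tmI 1 _ (by omega)]
      exact NSteps.refl _
  | succ k ih =>
      intro i
      rw [show restC (i+1) (k+1) = Term.lam (i+1) (.app (restC (i+2) k) (sTerm (i+1))) from rfl,
          msub_lam i (i+1) _ (Nat.lt_succ_self i), msub_app]
      refine NSteps.head (Whr.beta (i+1) _ (msub i (sTerm i))) ?_
      rw [show Term.subst (i+1) (msub i (sTerm i))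
            (.app (msub i (restC (i+2) k)) (msub i (sTerm (i+1))))
          = .app (msub (i+1) (restC (i+2) k)) (msub (i+1) (sTerm (i+1))) from rfl]
      exact ih (i+1)

lemma whrMain (n : ℕ) : NSteps Whr (n+2) (tN n) tmI := by
  rw [tN, nest_eq, show restC 0 (n+1) = Term.lam 0 (.app (restC 1 n) (sTerm 0)) from rfl]
  refine NSteps.head (Whr.beta 0 _ tmI) ?_
  rw [show Term.subst 0 tmI (.app (restC 1 n) (sTerm 0))
      = .app (msub 0 (restC 1 n)) (msub 0 (sTerm 0)) from rfl]
  exact whrRun n 0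

end SKX

/-- Space KAM abstract-time overhead explosion on
`tn := C0⟨C1⟨⋯Cn⟨λy.I⟩⋯⟩⟩ I`: the complete run has `Θ(n)` transitions and ends
in `(I, ε, ε)` (and `tn →wh^{Θ(n)} I`), yet some state of the run has closure
count at least `2^n`. -/
theorem space_kam_time_explosion :
    ∃ k1 k2 : ℕ, 0 < k1 ∧ 0 < k2 ∧ ∀ n : ℕ,
      (∃ m : ℕ, k1 * (n + 1) ≤ m ∧ m ≤ k2 * (n + 1) ∧
        NSteps SK m (initState (tN n)) ⟨tmI, .nil, []⟩ ∧ SKFinal ⟨tmI, .nil, []⟩) ∧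
      (∃ p : ℕ, k1 * (n + 1) ≤ p ∧ p ≤ k2 * (n + 1) ∧
        NSteps Whr p (tN n) tmI ∧ WhNormal tmI) ∧
      (∃ st : State, Relation.ReflTransGen SK (initState (tN n)) st ∧
        2 ^ n ≤ st.count) := by
  refine ⟨1, 4, one_pos, by norm_num, fun n => ?_⟩
  refine ⟨⟨2*n+4, by omega, by omega, SKX.skRun n, SKX.skfinal⟩,
    ⟨n+2, by omega, by omega, SKX.whrMain n, SKX.whnormal⟩, SKX.reach_main n⟩
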